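/- Fix a real X > 1 and an integer n ≥ 1, and set q = 1 − (1 − 1/X)^{1/n}. Let v_1,…,v_n be i.i.d. random variables taking value X with probability q and value 1 with probability 1 − q. Then: (a) Pr[max_i v_i = X] = 1/X and E[max_i v_i] = 2 − 1/X; (b) for every posted price p ≥ 0, in the single-item posted-price sale where the item is sold to the first buyer in a fixed order with v_i ≥ p (and realized welfare W equal to the purchaser's value, W = 0 if no sale), E[W] ≤ 1 + X·q. -/

import Mathlib

open MeasureTheory Finset

/-- tightness example for a single item. With `Xv > 1`,
`n ≥ 1` and `q = 1 − (1 − 1/Xv)^{1/n}`, let `v_1,…,v_n` be i.i.d., equal to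
`Xv` with probability `q` and to `1` otherwise. Then
(a) `Pr[max_i v_i = Xv] = 1/Xv` and `E[max_i v_i] = 2 − 1/Xv`; and
(b) for every posted price `p ≥ 0`, selling to the first buyer whose value is
at least `p` yields expected welfare at most `1 + Xv·q`. -/
theorem single_item_posted_price_tight
    {Ω : Type*} [MeasurableSpace Ω] (μ : Measure Ω) [IsProbabilityMeasure μ]
    {n : ℕ} [NeZero n]
    (Xv : ℝ) (hXv : 1 < Xv)
    (q : ℝ) (hq : q = 1 - (1 - 1 / Xv) ^ ((n : ℝ)⁻¹))
    (X : Fin n → Ω → ℝ)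
    (hmeas : ∀ i, Measurable (X i))
    (hindep : ProbabilityTheory.iIndepFun X μ)
    (hvals : ∀ i, ∀ᵐ ω ∂μ, X i ω = Xv ∨ X i ω = 1)
    (hprob : ∀ i, μ {ω | X i ω = Xv} = ENNReal.ofReal q) :
    (μ {ω | (Finset.univ.sup' Finset.univ_nonempty fun i => X i ω) = Xv} =
        ENNReal.ofReal (1 / Xv) ∧
      ∫ ω, (Finset.univ.sup' Finset.univ_nonempty fun i => X i ω) ∂μ =
        2 - 1 / Xv) ∧
    ∀ p : ℝ, 0 ≤ p →
      ∫ ω,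
          (if h : (Finset.univ.filter fun i => p ≤ X i ω).Nonempty
            then X ((Finset.univ.filter fun i => p ≤ X i ω).min' h) ω
            else 0) ∂μ ≤
        1 + Xv * q := by
  have hX0 : (0:ℝ) < Xv := lt_trans one_pos hXv
  have hinv0 : (0:ℝ) < 1 / Xv := by positivity
  have hinv1 : 1 / Xv < 1 := by
    rw [div_lt_one hX0]; exact hXv
  have hb0 : (0:ℝ) < 1 - 1 / Xv := by linarith
  have hb1 : 1 - 1 / Xv < 1 := by linarith
  have hnR : (0:ℝ) < (n:ℝ) := by
    exact_mod_cast Nat.pos_of_ne_zero (NeZero.ne n)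
  have hr0 : 0 < (1 - 1 / Xv) ^ ((n : ℝ)⁻¹) := Real.rpow_pos_of_pos hb0 _
  have hr1 : (1 - 1 / Xv) ^ ((n : ℝ)⁻¹) < 1 :=
    Real.rpow_lt_one hb0.le hb1 (by positivity)
  have hq0 : 0 < q := by rw [hq]; linarith
  have hq1 : q < 1 := by rw [hq]; linarith
  have hpow : (1 - q) ^ n = 1 - 1 / Xv := by
    have h1 : 1 - q = (1 - 1 / Xv) ^ ((n : ℝ)⁻¹) := by rw [hq]; ring
    rw [h1, ← Real.rpow_natCast ((1 - 1 / Xv) ^ ((n : ℝ)⁻¹)) n,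
      ← Real.rpow_mul hb0.le, inv_mul_cancel₀ hnR.ne', Real.rpow_one]
  -- per-coordinate probabilities
  have hmXv : ∀ i, MeasurableSet {ω | X i ω = Xv} := fun i =>
    hmeas i (measurableSet_singleton Xv)
  have hm1 : ∀ i, MeasurableSet {ω | X i ω = 1} := fun i =>
    hmeas i (measurableSet_singleton 1)
  have h1i : ∀ i, μ {ω | X i ω = 1} = ENNReal.ofReal (1 - q) := by
    intro i
    have hdisj : Disjoint {ω | X i ω = Xv} {ω | X i ω = 1} := by
      rw [Set.disjoint_left]
      intro ω h1 h2
      simp only [Set.mem_setOf_eq] at h1 h2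
      rw [h1] at h2; exact absurd h2 (ne_of_gt hXv)
    have hun : μ ({ω | X i ω = Xv} ∪ {ω | X i ω = 1}) = 1 := by
      rw [← prob_compl_eq_zero_iff ((hmXv i).union (hm1 i)), ← mem_ae_iff]
      filter_upwards [hvals i] with ω hω
      exact hω
    rw [measure_union hdisj (hm1 i), hprob i] at hun
    have : μ {ω | X i ω = 1} = 1 - ENNReal.ofReal q :=
      ENNReal.eq_sub_of_add_eq ENNReal.ofReal_ne_top (by rw [add_comm]; exact hun)
    rw [this, ← ENNReal.ofReal_one, ← ENNReal.ofReal_sub _ hq0.le]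
  -- intersection probability
  have hInterMeas : MeasurableSet (⋂ i, {ω | X i ω = 1}) :=
    MeasurableSet.iInter fun i => hm1 i
  have hInter : μ (⋂ i, {ω | X i ω = 1}) = ENNReal.ofReal ((1 - q) ^ n) := by
    rw [hindep.meas_iInter (s := fun i => {ω | X i ω = 1})
      (fun i => ⟨{1}, measurableSet_singleton 1, rfl⟩)]
    simp only [h1i]
    rw [Finset.prod_const, card_univ, Fintype.card_fin,
      ← ENNReal.ofReal_pow (by linarith)]
  -- the max event
  set M : Ω → ℝ := fun ω => Finset.univ.sup' Finset.univ_nonempty fun i => X i ω with hM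
  have hmeasM : Measurable M := by
    have : M = Finset.univ.sup' Finset.univ_nonempty X := by
      funext ω; rw [hM, Finset.sup'_apply]
    rw [this]
    exact Finset.measurable_sup' _ (fun i _ => hmeas i)
  set A : Set Ω := {ω | M ω = Xv} with hA
  have hAmeas : MeasurableSet A := hmeasM (measurableSet_singleton Xv)
  have hEae : ∀ᵐ ω ∂μ, ∀ i, X i ω = Xv ∨ X i ω = 1 := ae_all_iff.2 hvals
  -- pointwise characterizations on the good event
  have hMmem : ∀ ω, (∀ i, X i ω = Xv ∨ X i ω = 1) → (M ω = Xv ∨ M ω = 1) := by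
    intro ω hω
    obtain ⟨i, -, hi⟩ := Finset.exists_mem_eq_sup' Finset.univ_nonempty
      (fun i => X i ω)
    have hMi : M ω = X i ω := hi
    rw [hMi]; exact hω i
  have hMXv : ∀ ω, (∀ i, X i ω = Xv ∨ X i ω = 1) →
      ((M ω = Xv) ↔ ∃ i, X i ω = Xv) := by
    intro ω hω
    constructor
    · intro h
      obtain ⟨i, -, hi⟩ := Finset.exists_mem_eq_sup' Finset.univ_nonempty
        (fun i => X i ω)
      have hMi : M ω = X i ω := hi
      exact ⟨i, by rw [← hMi, h]⟩
    · rintro ⟨i, hi⟩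
      have hle : M ω ≤ Xv := by
        apply Finset.sup'_le
        intro j _
        rcases hω j with h | h
        · rw [h]
        · rw [h]; linarith
      have hge : Xv ≤ M ω := by
        have h2 : X i ω ≤ M ω := Finset.le_sup' (fun i => X i ω) (Finset.mem_univ i)
        rw [hi] at h2; exact h2
      exact le_antisymm hle hge
  have hAcompl : A =ᵐ[μ] ((⋂ i, {ω | X i ω = 1})ᶜ : Set Ω) := by
    refine Filter.eventuallyEq_set.2 ?_
    filter_upwards [hEae] with ω hω
    have hmem : ω ∈ A ↔ ∃ i, X i ω = Xv := hMXv ω hω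
    rw [hmem, Set.mem_compl_iff, Set.mem_iInter, not_forall]
    simp only [Set.mem_setOf_eq]
    constructor
    · rintro ⟨i, hi⟩
      exact ⟨i, by rw [hi]; exact (ne_of_gt hXv)⟩
    · rintro ⟨i, hi⟩
      rcases hω i with h | h
      · exact ⟨i, h⟩
      · exact absurd h hi
  have hmuA : μ A = ENNReal.ofReal (1 / Xv) := by
    rw [measure_congr hAcompl, measure_compl hInterMeas (measure_ne_top μ _),
      hInter, measure_univ]
    rw [← ENNReal.ofReal_one, ← ENNReal.ofReal_sub _ (pow_nonneg (by linarith) n), hpow]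
    congr 1
    ring
  have hmuAtoReal : (μ A).toReal = 1 / Xv := by
    rw [hmuA, ENNReal.toReal_ofReal hinv0.le]
  -- expectation of the max
  have hintM : ∫ ω, M ω ∂μ = 2 - 1 / Xv := by
    have hcongr : (fun ω => M ω) =ᵐ[μ]
        (fun ω => 1 + A.indicator (fun _ => Xv - 1) ω) := by
      filter_upwards [hEae] with ω hω
      by_cases hωA : ω ∈ A
      · rw [Set.indicator_of_mem hωA]
        have : M ω = Xv := hωA
        rw [this]; ring
      · rw [Set.indicator_of_notMem hωA]
        rcases hMmem ω hω with h | h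
        · exact absurd h hωA
        · rw [h]; ring
    rw [integral_congr_ae hcongr, integral_add (integrable_const 1)
      ((integrable_const (Xv - 1)).indicator hAmeas),
      integral_indicator_const _ hAmeas, integral_const, probReal_univ,
      measureReal_def, hmuAtoReal]
    simp only [ENNReal.toReal_one, one_smul, smul_eq_mul]
    field_simp
    ring
  refine ⟨⟨hmuA, hintM⟩, ?_⟩
  -- part (b)
  intro p hp
  set W : Ω → ℝ := fun ω =>
    if h : (Finset.univ.filter fun i => p ≤ X i ω).Nonempty
      then X ((Finset.univ.filter fun i => p ≤ X i ω).min' h) ω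
      else 0 with hW
  show ∫ ω, W ω ∂μ ≤ 1 + Xv * q
  by_cases hple : p ≤ 1
  · -- everyone can afford; buyer 0 gets the item
    have hnpos : 0 < n := Nat.pos_of_ne_zero (NeZero.ne n)
    set i0 : Fin n := ⟨0, hnpos⟩ with hi0
    have hkey : ∀ᵐ ω ∂μ, W ω = X i0 ω := by
      filter_upwards [hEae] with ω hω
      have hfilt : (Finset.univ.filter fun i => p ≤ X i ω) = Finset.univ := by
        apply Finset.filter_true_of_mem
        intro i _
        rcases hω i with h | h <;> rw [h] <;> linarith
      have hne : (Finset.univ.filter fun i => p ≤ X i ω).Nonempty := by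
        rw [hfilt]; exact Finset.univ_nonempty
      rw [hW]
      simp only
      rw [dif_pos hne]
      congr 1
      apply le_antisymm
      · apply Finset.min'_le
        rw [hfilt]; exact Finset.mem_univ i0
      · apply Finset.le_min'
        intro j _
        exact Fin.mk_le_of_le_val (Nat.zero_le _)
    have hXi0 : ∫ ω, X i0 ω ∂μ = 1 + (Xv - 1) * q := by
      have hcongr : (fun ω => X i0 ω) =ᵐ[μ]
          (fun ω => 1 + ({ω | X i0 ω = Xv}).indicator (fun _ => Xv - 1) ω) := by
        filter_upwards [hvals i0] with ω hω
        by_cases hωA : ω ∈ {ω | X i0 ω = Xv}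
        · rw [Set.indicator_of_mem hωA]
          have : X i0 ω = Xv := hωA
          rw [this]; ring
        · rw [Set.indicator_of_notMem hωA]
          rcases hω with h | h
          · exact absurd h hωA
          · rw [h]; ring
      rw [integral_congr_ae hcongr, integral_add (integrable_const 1)
        ((integrable_const (Xv - 1)).indicator (hmXv i0)),
        integral_indicator_const _ (hmXv i0), integral_const, probReal_univ,
        measureReal_def, hprob i0, ENNReal.toReal_ofReal hq0.le]
      simp only [ENNReal.toReal_one, one_smul, smul_eq_mul]
      ring
    rw [integral_congr_ae hkey, hXi0]
    nlinarith
  · -- price exceeds 1 : only high-value buyers buy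
    push_neg at hple
    by_cases hInt : Integrable W μ
    · have hbound : ∀ᵐ ω ∂μ, W ω ≤ A.indicator (fun _ => Xv) ω := by
        filter_upwards [hEae] with ω hω
        rw [hW]
        simp only
        by_cases hne : (Finset.univ.filter fun i => p ≤ X i ω).Nonempty
        · rw [dif_pos hne]
          set i := (Finset.univ.filter fun i => p ≤ X i ω).min' hne with hi
          have hiMem : i ∈ Finset.univ.filter fun i => p ≤ X i ω :=
            Finset.min'_mem _ _
          have hpi : p ≤ X i ω := (Finset.mem_filter.1 hiMem).2
          have hXi : X i ω = Xv := by
            rcases hω i with h | h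
            · exact h
            · rw [h] at hpi; linarith
          have hωA : ω ∈ A := (hMXv ω hω).2 ⟨i, hXi⟩
          rw [Set.indicator_of_mem hωA, hXi]
        · rw [dif_neg hne]
          exact Set.indicator_nonneg (fun _ _ => hX0.le) ω
      have hIndInt : Integrable (A.indicator (fun _ => Xv)) μ :=
        (integrable_const Xv).indicator hAmeas
      calc ∫ ω, W ω ∂μ ≤ ∫ ω, A.indicator (fun _ => Xv) ω ∂μ :=
            integral_mono_ae hInt hIndInt hbound
        _ = Xv * (1 / Xv) := by
            rw [integral_indicator_const _ hAmeas, measureReal_def, hmuAtoReal]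
            rw [smul_eq_mul]; ring
        _ ≤ 1 + Xv * q := by
            rw [mul_one_div, div_self hX0.ne']
            nlinarith
    · rw [integral_undef hInt]
      nlinarith
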